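/- Let G be an abelian group generated by elements σ₁, σ₂ with ord(σ₁) = e, σ₂^f = σ₁^r, and |G| = ef. Then ord(σ₂) = f · e / gcd(e, r), and G is cyclic if and only if gcd(e, f, r) = 1. -/
import Mathlib


/-- Let `G` be an abelian group of order `ef`, generated by `σ₁, σ₂` with
`ord(σ₁) = e` and `σ₂^f = σ₁^r`. Then `ord(σ₂) = f * e / gcd(e, r)` and `G` is
cyclic iff `gcd(e, f, r) = 1`. -/
theorem order_sigma2_and_cyclic_iff (G : Type*) [CommGroup G] [Fintype G]
    (σ₁ σ₂ : G) (e f r : ℕ) (he : 0 < e) (hf : 0 < f) (hr : 0 < r)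
    (hcard : Fintype.card G = e * f)
    (hgen : Subgroup.closure ({σ₁, σ₂} : Set G) = ⊤)
    (hord : orderOf σ₁ = e)
    (h3 : σ₂ ^ f = σ₁ ^ r) :
    orderOf σ₂ = f * e / Nat.gcd e r ∧ (IsCyclic G ↔ Nat.gcd (Nat.gcd e f) r = 1) := by
  classical
  have hncard : Nat.card G = e * f := by rw [Nat.card_eq_fintype_card, hcard]
  set d := Nat.gcd e r with hd
  have hdpos : 0 < d := Nat.gcd_pos_of_pos_left _ he
  have hddvd : d ∣ e := Nat.gcd_dvd_left e r
  obtain ⟨e', he'⟩ : ∃ e', e = d * e' := hddvd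
  have he'pos : 0 < e' := by
    rcases Nat.eq_zero_or_pos e' with h | h
    · subst h; simp [he'] at he
    · exact h
  have hed : e / d = e' := by rw [he', Nat.mul_div_cancel_left _ hdpos]
  -- quotient by ⟨σ₁⟩
  set H := Subgroup.zpowers σ₁ with hH
  have hcardH : Nat.card H = e := by rw [hH, Nat.card_zpowers, hord]
  have hcardQ : Nat.card (G ⧸ H) = f := by
    have h1 := Subgroup.card_eq_card_quotient_mul_card_subgroup H
    rw [hncard, hcardH, mul_comm e f] at h1
    exact (Nat.eq_of_mul_eq_mul_right he h1.symm)
  set π := QuotientGroup.mk' H with hπ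
  have hπσ₁ : π σ₁ = 1 := (QuotientGroup.eq_one_iff _).mpr (Subgroup.mem_zpowers σ₁)
  have htopQ : ∀ x : G ⧸ H, x ∈ Subgroup.zpowers (π σ₂) := by
    have hsurj : Function.Surjective π := QuotientGroup.mk'_surjective H
    have h1 : Subgroup.closure (π '' {σ₁, σ₂}) = ⊤ := by
      rw [← MonoidHom.map_closure, hgen, Subgroup.map_top_of_surjective _ hsurj]
    rw [Set.image_insert_eq, Set.image_singleton, hπσ₁] at h1
    have h2 : Subgroup.closure ({1, π σ₂} : Set (G ⧸ H)) ≤ Subgroup.zpowers (π σ₂) := by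
      apply Subgroup.closure_le _ |>.mpr
      intro x hx
      rcases hx with hx | hx
      · subst hx; exact Subgroup.one_mem _
      · simp only [Set.mem_singleton_iff] at hx; subst hx; exact Subgroup.mem_zpowers _
    intro x
    exact h2 (h1 ▸ Subgroup.mem_top x)
  have hordQ : orderOf (π σ₂) = f := by
    rw [orderOf_eq_card_of_forall_mem_zpowers htopQ, hcardQ]
  have hfdvd : f ∣ orderOf σ₂ := hordQ ▸ orderOf_map_dvd π σ₂
  set n := orderOf σ₂ with hn
  have hne : n = f * e' := by
    have h4 : orderOf (σ₂ ^ f) = orderOf (σ₁ ^ r) := by rw [h3]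
    rw [orderOf_pow, orderOf_pow, hord, ← hd, hed, ← hn, Nat.gcd_eq_right hfdvd] at h4
    rw [← Nat.mul_div_cancel' hfdvd, h4]
  have hfirst : n = f * e / d := by
    rw [Nat.mul_div_assoc f ⟨e', he'⟩, hed, hne]
  refine ⟨hfirst, ?_⟩
  -- exponent
  set L := Nat.lcm e n with hL
  have hpow : ∀ g : G, g ^ L = 1 := by
    have hK : Subgroup.closure ({σ₁, σ₂} : Set G) ≤ (powMonoidHom L : G →* G).ker := by
      apply Subgroup.closure_le _ |>.mpr
      intro x hx
      rcases hx with hx | hx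
      · subst hx
        rw [SetLike.mem_coe, MonoidHom.mem_ker, powMonoidHom_apply]
        exact orderOf_dvd_iff_pow_eq_one.mp (hord ▸ Nat.dvd_lcm_left e n)
      · simp only [Set.mem_singleton_iff] at hx; subst hx
        rw [SetLike.mem_coe, MonoidHom.mem_ker, powMonoidHom_apply]
        exact orderOf_dvd_iff_pow_eq_one.mp (Nat.dvd_lcm_right e n)
    intro g
    have : g ∈ (powMonoidHom L : G →* G).ker := by
      rw [hgen] at hK; exact hK (Subgroup.mem_top g)
    rwa [MonoidHom.mem_ker, powMonoidHom_apply] at this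
  have hexp : Monoid.exponent G = L :=
    Nat.dvd_antisymm (Monoid.exponent_dvd_of_forall_pow_eq_one hpow)
      (Nat.lcm_dvd (hord ▸ Monoid.order_dvd_exponent σ₁) (Monoid.order_dvd_exponent σ₂))
  have hkey : Nat.gcd d f * e' * L = e * n := by
    have := Nat.gcd_mul_lcm e n
    rwa [← hL, hne, he', Nat.gcd_mul_right, ← hne, ← he'] at this
  have hg3 : Nat.gcd (Nat.gcd e f) r = Nat.gcd d f := by
    rw [hd, Nat.gcd_assoc e f r, Nat.gcd_comm f r, ← Nat.gcd_assoc]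
  rw [IsCyclic.iff_exponent_eq_card, hexp, hncard, hg3]
  constructor
  · intro h
    have h2 : Nat.gcd d f * (e' * e * f) = 1 * (e' * e * f) := by
      calc Nat.gcd d f * (e' * e * f) = Nat.gcd d f * e' * (e * f) := by ring
        _ = e * n := by rw [← h, hkey]
        _ = e * (f * e') := by rw [hne]
        _ = 1 * (e' * e * f) := by ring
    exact Nat.eq_of_mul_eq_mul_right (by positivity) h2
  · intro h
    have h2 : e' * L = e' * (e * f) := by
      calc e' * L = Nat.gcd d f * e' * L := by rw [h, one_mul]
        _ = e * n := hkey
        _ = e * (f * e') := by rw [hne]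
        _ = e' * (e * f) := by ring
    exact Nat.eq_of_mul_eq_mul_left he'pos h2
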